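/- An abelian relation (g_1(F_1),...,g_d(F_d)) of the d-web W(F_1,...,F_d), corresponding under the isomorphism T to the 1-form r·(dy − p dx)/∂_p F with r = F·Σ_{i=1}^d g_i(F_i)∂_y(F_i)/(p − p_i), is an abelian relation of the extracted web W_k(d−1) obtained by removing the k-th foliation if and only if r(x,y,p_k) = 0, i.e. (p − p_k) divides r in O[p]. -/
import Mathlib


open Polynomial

/-- Coefficientwise application of a derivation `δ` of `O` to a polynomial in `O[X]`. -/
noncomputable def cderiv {O : Type*} [CommRing O] (δ : O → O) (f : O[X]) : O[X] :=
  f.sum fun n a => C (δ a) * X ^ n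

/-- The Sylvester matrix of `f` (degree `n`) and `g` (degree `m`); its determinant
is the resultant of `f` and `g`. -/
noncomputable def sylvester {O : Type*} [CommRing O] (f g : O[X]) (n m : ℕ) :
    Matrix (Fin (m + n)) (Fin (m + n)) O :=
  Matrix.of fun i j =>
    if (i : ℕ) < m then
      (if (i : ℕ) ≤ (j : ℕ) ∧ (j : ℕ) ≤ (i : ℕ) + n then f.coeff (n - ((j : ℕ) - (i : ℕ))) else 0)
    else
      (if (i : ℕ) - m ≤ (j : ℕ) ∧ (j : ℕ) ≤ (i : ℕ) - m + m then
        g.coeff (m - ((j : ℕ) - ((i : ℕ) - m))) else 0)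

/-- An abelian relation `(g_1(F_1), …, g_d(F_d))` of the web
`W(F_1, …, F_d)`, corresponding to
`r = F·Σ g_i(F_i) ∂_y(F_i)/(p − p_i) = Σ g_i(F_i) ∂_y(F_i)·∏_{j≠i}(p − p_j)`,
belongs to the extracted web `W_k(d−1)` (i.e. `g_k(F_k) = 0`) if and only if
`r(p_k) = 0`, if and only if `(p − p_k) ∣ r`; indeed
`r(p_k) = g_k(F_k)·∂_y(F_k)·∏_{j≠k}(p_k − p_j)`. -/
theorem statement12 {O : Type*} [CommRing O] (dx dy : Derivation ℤ O O)
    (d : ℕ) (hd : 3 ≤ d)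
    (Fl : Fin d → O)   -- the level functions F_i
    (g : Fin d → O)    -- the values g_i(F_i)
    (p : Fin d → O)    -- the slopes
    (hdyF : ∀ i, IsUnit (dy (Fl i)))
    (hslope : ∀ i, dx (Fl i) + p i * dy (Fl i) = 0)
    (hp : ∀ i j, i ≠ j → IsUnit (p i - p j))
    (r : O[X])
    (hr : r = ∑ i, C (g i * dy (Fl i)) *
        ∏ j ∈ Finset.univ.erase i, (X - C (p j)))
    (k : Fin d) :
    r.eval (p k) = g k * dy (Fl k) * ∏ j ∈ Finset.univ.erase k, (p k - p j) ∧
    (g k = 0 ↔ r.eval (p k) = 0) ∧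
    (r.eval (p k) = 0 ↔ (X - C (p k)) ∣ r) := by

  have h1 : r.eval (p k) = g k * dy (Fl k) * ∏ j ∈ Finset.univ.erase k, (p k - p j) := by
    subst hr
    rw [eval_finset_sum]
    rw [Finset.sum_eq_single k]
    · simp [eval_prod]
    · intro i _ hik
      rw [eval_mul, eval_prod]
      have : ∏ j ∈ Finset.univ.erase i, eval (p k) (X - C (p j)) = 0 := by
        apply Finset.prod_eq_zero (i := k) (Finset.mem_erase.mpr ⟨(Ne.symm hik), Finset.mem_univ k⟩)
        simp
      rw [this, mul_zero]
    · simp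
  have hu : IsUnit (dy (Fl k) * ∏ j ∈ Finset.univ.erase k, (p k - p j)) := by
    exact (hdyF k).mul (Finset.prod_induction _ IsUnit (fun a b => IsUnit.mul) isUnit_one
      (fun j hj => hp k j (Finset.ne_of_mem_erase hj).symm))
  refine ⟨h1, ⟨fun h => by simp [h1, h], fun h => ?_⟩, ?_⟩
  · rw [h1, mul_assoc] at h
    obtain ⟨u, hu⟩ := hu
    rw [← hu] at h
    have := congrArg (· * (↑u⁻¹ : O)) h
    simpa [mul_assoc] using this
  · exact (dvd_iff_isRoot).symm
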